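/- Let g3(n)=α1 n+α0, g2(n)=β1 n+β0, g1(n)=γ1 n+γ0 be real polynomials of degree at most 1 with g3(n) > 0, g2(n) > 0 and g1(n) < 0 for all integers n ≥ 0, and with g2(n)² + 4 g3(n) g1(n) ≥ 0 for all n ≥ 1. Let λ_n and Λ_n be the smaller and larger roots of χ_n(x) = g3(n)x² − g2(n)x − g1(n). Suppose (λ_n)_{n≥1} is increasing with finite limit λ_∞, and that λ_∞ < Λ_n for every n ≥ 1. If (u_n)_{n≥-1} is a solution of g3(n)u_n = g2(n)u_{n-1} + g1(n)u_{n-2} (n ≥ 1) and there is k ≥ 1 with u_{-1} > 0, u_0 > 0, …, u_k > 0 and u_k/u_{k-1} ≥ λ_∞, then u_n > 0 for every n ≥ −1. -/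

import Mathlib

open Filter

/-- The smaller root `λ_n` of the `n`-th characteristic polynomial
`χ_n(x) = g3(n) x² − g2(n) x − g1(n)`. -/
noncomputable def charRootLo (α1 α0 β1 β0 γ1 γ0 : ℝ) (n : ℤ) : ℝ :=
  ((β1 * (n : ℝ) + β0) -
      Real.sqrt ((β1 * (n : ℝ) + β0) ^ 2 +
        4 * (α1 * (n : ℝ) + α0) * (γ1 * (n : ℝ) + γ0))) /
    (2 * (α1 * (n : ℝ) + α0))

/-- The larger root `Λ_n` of the `n`-th characteristic polynomial. -/
noncomputable def charRootHi (α1 α0 β1 β0 γ1 γ0 : ℝ) (n : ℤ) : ℝ :=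
  ((β1 * (n : ℝ) + β0) +
      Real.sqrt ((β1 * (n : ℝ) + β0) ^ 2 +
        4 * (α1 * (n : ℝ) + α0) * (γ1 * (n : ℝ) + γ0))) /
    (2 * (α1 * (n : ℝ) + α0))

/-- Signature `(+,−)`, nonnegative discriminants, `(λ_n)` increasing with
finite limit `λ_∞` and `λ_∞ < Λ_n` for all `n ≥ 1`: if a solution `u` satisfies
`u (-1), …, u k > 0` and `u k / u (k-1) ≥ λ_∞` for some `k ≥ 1`, then `u n > 0` for
every `n ≥ −1`. -/
theorem stmt_15 (α1 α0 β1 β0 γ1 γ0 lamInf : ℝ) (u : ℤ → ℝ) (k : ℤ)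
    (hsig : ∀ n : ℤ, 0 ≤ n →
      0 < α1 * (n : ℝ) + α0 ∧ 0 < β1 * (n : ℝ) + β0 ∧ γ1 * (n : ℝ) + γ0 < 0)
    (hdisc : ∀ n : ℤ, 1 ≤ n →
      0 ≤ (β1 * (n : ℝ) + β0) ^ 2 + 4 * (α1 * (n : ℝ) + α0) * (γ1 * (n : ℝ) + γ0))
    (hinc : ∀ n : ℤ, 1 ≤ n →
      charRootLo α1 α0 β1 β0 γ1 γ0 n ≤ charRootLo α1 α0 β1 β0 γ1 γ0 (n + 1))
    (hlim : Tendsto (fun n : ℕ => charRootLo α1 α0 β1 β0 γ1 γ0 ((n : ℤ) + 1)) atTop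
      (nhds lamInf))
    (hsep : ∀ n : ℤ, 1 ≤ n → lamInf < charRootHi α1 α0 β1 β0 γ1 γ0 n)
    (hu : ∀ n : ℤ, 1 ≤ n →
      (α1 * (n : ℝ) + α0) * u n =
        (β1 * (n : ℝ) + β0) * u (n - 1) + (γ1 * (n : ℝ) + γ0) * u (n - 2))
    (hk : 1 ≤ k)
    (hupos : ∀ n : ℤ, -1 ≤ n → n ≤ k → 0 < u n)
    (hratio : lamInf ≤ u k / u (k - 1)) :
    ∀ n : ℤ, -1 ≤ n → 0 < u n := by
  have hmono : Monotone (fun n : ℕ => charRootLo α1 α0 β1 β0 γ1 γ0 ((n : ℤ) + 1)) := by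
    apply monotone_nat_of_le_succ
    intro m
    have := hinc ((m : ℤ) + 1) (by omega)
    simpa [add_assoc] using this
  have hle : ∀ n : ℤ, 1 ≤ n → charRootLo α1 α0 β1 β0 γ1 γ0 n ≤ lamInf := by
    intro n hn
    have h := hmono.ge_of_tendsto hlim (n - 1).toNat
    have : ((n - 1).toNat : ℤ) + 1 = n := by omega
    rw [this] at h
    exact h
  -- lamInf positive
  have hL1 : 0 < charRootLo α1 α0 β1 β0 γ1 γ0 1 := by
    obtain ⟨ha, hb, hc⟩ := hsig 1 (by norm_num)
    have hd := hdisc 1 (by norm_num)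
    unfold charRootLo
    apply div_pos _ (by linarith)
    have hs : Real.sqrt ((β1 * ((1:ℤ) : ℝ) + β0) ^ 2 +
        4 * (α1 * ((1:ℤ) : ℝ) + α0) * (γ1 * ((1:ℤ) : ℝ) + γ0)) < β1 * ((1:ℤ) : ℝ) + β0 := by
      rw [Real.sqrt_lt' (by push_cast at hb ⊢; linarith)]
      push_cast at ha hc ⊢
      nlinarith
    linarith
  have hLpos : 0 < lamInf := lt_of_lt_of_le hL1 (hle 1 le_rfl)
  -- key inequality: chi_n(lamInf) ≤ 0
  have hkey : ∀ n : ℤ, 1 ≤ n →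
      (α1 * (n : ℝ) + α0) * lamInf ^ 2 ≤ (β1 * (n : ℝ) + β0) * lamInf + (γ1 * (n : ℝ) + γ0) := by
    intro n hn
    obtain ⟨ha, hb, hc⟩ := hsig n (by omega)
    have hd := hdisc n hn
    set a := α1 * (n : ℝ) + α0
    set b := β1 * (n : ℝ) + β0
    set c := γ1 * (n : ℝ) + γ0
    set s := Real.sqrt (b ^ 2 + 4 * a * c) with hs
    have hs2 : s ^ 2 = b ^ 2 + 4 * a * c := Real.sq_sqrt hd
    have hlo : (b - s) / (2 * a) ≤ lamInf := hle n hn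
    have hhi : lamInf < (b + s) / (2 * a) := hsep n hn
    rw [div_le_iff₀ (by linarith)] at hlo
    rw [lt_div_iff₀ (by linarith)] at hhi
    nlinarith [sq_nonneg (2 * a * lamInf - b)]
  -- base ratio
  have hbase : lamInf * u (k - 1) ≤ u k := by
    have hpos := hupos (k - 1) (by omega) (by omega)
    calc lamInf * u (k - 1) ≤ (u k / u (k - 1)) * u (k - 1) := by
          exact mul_le_mul_of_nonneg_right hratio hpos.le
      _ = u k := by field_simp
  -- main induction
  have hmain : ∀ m : ℕ, 0 < u (k + m) ∧ lamInf * u (k + m - 1) ≤ u (k + m) := by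
    intro m
    induction m with
    | zero => simpa using ⟨hupos k (by omega) le_rfl, hbase⟩
    | succ m ih =>
      obtain ⟨hpos, hrat⟩ := ih
      have hn1 : (1 : ℤ) ≤ k + (m : ℤ) + 1 := by omega
      have hrec := hu (k + (m : ℤ) + 1) hn1
      have e1 : k + ((m : ℤ)) + 1 - 1 = k + (m : ℤ) := by ring
      have e2 : k + ((m : ℤ)) + 1 - 2 = k + (m : ℤ) - 1 := by ring
      rw [e1, e2] at hrec
      obtain ⟨ha, hb, hc⟩ := hsig (k + (m : ℤ) + 1) (by omega)
      have hk2 := hkey (k + (m : ℤ) + 1) hn1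
      set a := α1 * ((k + (m : ℤ) + 1 : ℤ) : ℝ) + α0
      set b := β1 * ((k + (m : ℤ) + 1 : ℤ) : ℝ) + β0
      set c := γ1 * ((k + (m : ℤ) + 1 : ℤ) : ℝ) + γ0
      have hc1 : c * (u (k + (m : ℤ)) - lamInf * u (k + (m : ℤ) - 1)) ≤ 0 :=
        mul_nonpos_of_nonpos_of_nonneg hc.le (by linarith)
      have hstep : lamInf * u (k + (m : ℤ)) ≤ u (k + (m : ℤ) + 1) := by
        have h1 : lamInf * (a * u (k + (m : ℤ) + 1)) ≥ a * lamInf ^ 2 * u (k + (m : ℤ)) := by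
          nlinarith [mul_le_mul_of_nonneg_right hk2 hpos.le]
        have h2 : a * (lamInf * u (k + (m : ℤ) + 1)) ≥ a * (lamInf * (lamInf * u (k + (m : ℤ)))) := by
          nlinarith
        have := (mul_le_mul_iff_right₀ ha).mp h2
        calc lamInf * u (k + (m : ℤ)) ≤ lamInf * (lamInf * u (k + (m : ℤ))) / lamInf := by
              field_simp
              exact le_rfl
          _ ≤ u (k + (m : ℤ) + 1) := by
              rw [div_le_iff₀ hLpos]
              nlinarith
      constructor
      · have : (0:ℝ) < lamInf * u (k + (m : ℤ)) := mul_pos hLpos hpos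
        push_cast
        have e3 : k + ((m : ℤ) + 1) = k + (m : ℤ) + 1 := by ring
        rw [e3]
        linarith
      · push_cast
        have e5 : k + ((m : ℤ) + 1) - 1 = k + (m : ℤ) := by ring
        have e6 : k + ((m : ℤ) + 1) = k + (m : ℤ) + 1 := by ring
        rw [e5, e6]
        exact hstep
  -- conclude
  intro n hn
  rcases le_or_gt n k with h | h
  · exact hupos n hn h
  · have hm : k + ((n - k).toNat : ℤ) = n := by omega
    have := (hmain (n - k).toNat).1
    rwa [hm] at this
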